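/- arXiv:1704.06929 — 2 statements merged into one kernel-verified Lean document; each statement's English description precedes it below -/
import Mathlib

section
/- Let C(r,t|r₀) = (1/(4πr r₀))·(1/√(4πDt))·(exp(−(r−r₀)²/(4Dt)) − exp(−(r+r₀−2r_r)²/(4Dt))) for r ≥ r_r. Then the absorption rate K(t|r₀) = 4π r_r² D · ∂C/∂r evaluated at r = r_r equals (r_r/r₀)·(1/√(4πDt))·((r₀−r_r)/t)·exp(−(r₀−r_r)²/(4Dt)). -/
open Real

/-- The absorption rate `K(t|r₀) = 4π r_r² D ∂C/∂r |_{r=r_r}` for the diffusion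
Green's function outside a fully absorbing sphere. -/
theorem absorption_rate_eq
    (D t rr r0 : ℝ) (hD : 0 < D) (ht : 0 < t) (hrr : 0 < rr) (hr0 : rr < r0) :
    4 * π * rr ^ 2 * D *
      deriv (fun r : ℝ =>
        1 / (4 * π * r * r0) * (1 / Real.sqrt (4 * π * D * t)) *
          (Real.exp (-(r - r0) ^ 2 / (4 * D * t)) -
            Real.exp (-(r + r0 - 2 * rr) ^ 2 / (4 * D * t)))) rr =
      (rr / r0) * (1 / Real.sqrt (4 * π * D * t)) * ((r0 - rr) / t) *
        Real.exp (-(r0 - rr) ^ 2 / (4 * D * t)) := by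
  have hπ : (0:ℝ) < π := Real.pi_pos
  set c : ℝ := 1 / Real.sqrt (4 * π * D * t) with hc
  have hr0p : 0 < r0 := hrr.trans hr0
  have hne : 4 * π * rr * r0 ≠ 0 := ne_of_gt (by positivity)
  -- derivative of u r = 1 / (4 π r r0) * c
  have hu : HasDerivAt (fun r : ℝ => 1 / (4 * π * r * r0) * c)
      (-(4 * π * r0) / (4 * π * rr * r0) ^ 2 * c) rr := by
    have h1 : HasDerivAt (fun r : ℝ => 4 * π * r * r0) (4 * π * r0) rr := by
      have := ((hasDerivAt_id rr).const_mul (4 * π)).mul_const r0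
      simpa using this
    have h2 := (h1.inv hne).mul_const c
    have : -(4 * π * r0) / (4 * π * rr * r0) ^ 2 = -(4 * π * r0) / (4 * π * rr * r0) ^ 2 * 1 := by
      ring
    simpa [one_div, div_eq_mul_inv, neg_div] using h2
  -- derivative of v
  have hexp1 : HasDerivAt (fun r : ℝ => Real.exp (-(r - r0) ^ 2 / (4 * D * t)))
      (Real.exp (-(rr - r0) ^ 2 / (4 * D * t)) * (-(2 * (rr - r0)) / (4 * D * t))) rr := by
    have h1 : HasDerivAt (fun r : ℝ => -(r - r0) ^ 2 / (4 * D * t))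
        (-(2 * (rr - r0)) / (4 * D * t)) rr := by
      have := (((hasDerivAt_id rr).sub_const r0).pow 2).neg.div_const (4 * D * t)
      simpa [mul_comm, mul_assoc, mul_left_comm] using this
    exact h1.exp
  have hexp2 : HasDerivAt (fun r : ℝ => Real.exp (-(r + r0 - 2 * rr) ^ 2 / (4 * D * t)))
      (Real.exp (-(rr + r0 - 2 * rr) ^ 2 / (4 * D * t)) *
        (-(2 * (rr + r0 - 2 * rr)) / (4 * D * t))) rr := by
    have h1 : HasDerivAt (fun r : ℝ => -(r + r0 - 2 * rr) ^ 2 / (4 * D * t))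
        (-(2 * (rr + r0 - 2 * rr)) / (4 * D * t)) rr := by
      have := ((((hasDerivAt_id rr).add_const r0).sub_const (2 * rr)).pow 2).neg.div_const
        (4 * D * t)
      simpa [mul_comm, mul_assoc, mul_left_comm] using this
    exact h1.exp
  have hv := hexp1.sub hexp2
  have hf := hu.mul hv
  erw [hf.deriv]
  simp only [Pi.sub_apply]
  have hsame : rr + r0 - 2 * rr = -(rr - r0) := by ring
  have hE : Real.exp (-(rr + r0 - 2 * rr) ^ 2 / (4 * D * t)) =
      Real.exp (-(rr - r0) ^ 2 / (4 * D * t)) := by rw [hsame]; ring_nf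
  have hE2 : Real.exp (-(rr - r0) ^ 2 / (4 * D * t)) =
      Real.exp (-(r0 - rr) ^ 2 / (4 * D * t)) := by
    congr 1; ring
  rw [hE, hE2]
  set E := Real.exp (-(r0 - rr) ^ 2 / (4 * D * t))
  have hDt : (4 * D * t) ≠ 0 := by positivity
  have hr0' : r0 ≠ 0 := ne_of_gt (hrr.trans hr0)
  field_simp [ht.ne', hr0']
  ring
end

section
/- For D > 0, r_r > 0, λ > 0, N > 0, 0 ≤ t, T > 0, the integral 4πλN ∫_{r_r}^∞ [ (r_r/r)·erfc((r−r_r)/√(4D(t+T))) − (r_r/r)·erfc((r−r_r)/√(4Dt)) ]·r² dr equals 4√π·λ·N·r_r·[ D√π·T + 2√D·r_r·(√(t+T) − √t) ]. -/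
open Real MeasureTheory

open Set Filter Topology

/-- The complementary error function `erfc x = (2/√π) ∫_x^∞ e^{−u²} du`. -/
noncomputable def erfc (x : ℝ) : ℝ :=
  (2 / Real.sqrt π) * ∫ u in Set.Ioi x, Real.exp (-u ^ 2)


lemma integrable_g : Integrable (fun u : ℝ => Real.exp (-u ^ 2)) := by
  simpa using integrable_exp_neg_mul_sq (one_pos)

lemma gauss_Ioi : ∫ u in Set.Ioi (0:ℝ), Real.exp (-u ^ 2) = Real.sqrt π / 2 := by
  simpa using integral_gaussian_Ioi 1

lemma erfc_eq (x : ℝ) :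
    erfc x = 1 - (2 / Real.sqrt π) * ∫ u in (0:ℝ)..x, Real.exp (-u ^ 2) := by
  have h1 : (∫ u in Set.Iic x, Real.exp (-u ^ 2)) + ∫ u in Set.Ioi x, Real.exp (-u ^ 2)
      = ∫ u, Real.exp (-u ^ 2) :=
    intervalIntegral.integral_Iic_add_Ioi integrable_g.integrableOn integrable_g.integrableOn
  have h0 : (∫ u in Set.Iic (0:ℝ), Real.exp (-u ^ 2)) + ∫ u in Set.Ioi (0:ℝ), Real.exp (-u ^ 2)
      = ∫ u, Real.exp (-u ^ 2) :=
    intervalIntegral.integral_Iic_add_Ioi integrable_g.integrableOn integrable_g.integrableOn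
  have h2 : ((∫ u in Set.Iic x, Real.exp (-u ^ 2)) - ∫ u in Set.Iic (0:ℝ), Real.exp (-u ^ 2))
      = ∫ u in (0:ℝ)..x, Real.exp (-u ^ 2) :=
    intervalIntegral.integral_Iic_sub_Iic integrable_g.integrableOn integrable_g.integrableOn
  have hs : Real.sqrt π ≠ 0 := by positivity
  rw [erfc, ← h2]
  have h3 : (∫ u in Set.Ioi x, Real.exp (-u ^ 2))
      = Real.sqrt π / 2 - ((∫ u in Set.Iic x, Real.exp (-u ^ 2)) - ∫ u in Set.Iic (0:ℝ), Real.exp (-u ^ 2)) := by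
    rw [← gauss_Ioi]; linarith
  rw [h3]; field_simp

lemma continuous_erfc : Continuous erfc := by
  have : Continuous fun x : ℝ => ∫ u in (0:ℝ)..x, Real.exp (-u ^ 2) :=
    integrable_g.continuous_primitive 0
  rw [show erfc = _ from funext erfc_eq]
  exact continuous_const.sub (continuous_const.mul this)

lemma hasDerivAt_erfc (x : ℝ) :
    HasDerivAt erfc (-(2 / Real.sqrt π) * Real.exp (-x ^ 2)) x := by
  have hc : Continuous fun u : ℝ => Real.exp (-u ^ 2) := by continuity
  have h : HasDerivAt (fun x : ℝ => ∫ u in (0:ℝ)..x, Real.exp (-u ^ 2))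
      (Real.exp (-x ^ 2)) x :=
    intervalIntegral.integral_hasDerivAt_right integrable_g.intervalIntegrable
      (hc.stronglyMeasurableAtFilter _ _) hc.continuousAt
  have := (hasDerivAt_const x (1:ℝ)).sub ((h.const_mul (2 / Real.sqrt π)))
  simp only [funext erfc_eq]
  refine this.congr_deriv ?_
  ring

lemma erfc_zero : erfc 0 = 1 := by
  have hs : Real.sqrt π ≠ 0 := by positivity
  rw [erfc, gauss_Ioi]; field_simp

lemma erfc_nonneg (x : ℝ) : 0 ≤ erfc x := by
  rw [erfc]
  apply mul_nonneg (by positivity)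
  exact setIntegral_nonneg measurableSet_Ioi fun u _ => (Real.exp_pos _).le

lemma translate_Ioi (g : ℝ → ℝ) (hg : Integrable g) (x : ℝ) :
    ∫ u in Set.Ioi x, g (u - x) = ∫ u in Set.Ioi (0:ℝ), g u := by
  rw [← integral_indicator measurableSet_Ioi, ← integral_indicator measurableSet_Ioi]
  have : (Set.Ioi x).indicator (fun u => g (u - x)) = fun u => (Set.Ioi (0:ℝ)).indicator g (u - x) := by
    funext u
    by_cases h : u ∈ Set.Ioi x
    · rw [Set.indicator_of_mem h, Set.indicator_of_mem (by simpa [Set.mem_Ioi, sub_pos] using h)]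
    · rw [Set.indicator_of_notMem h, Set.indicator_of_notMem (by simpa [Set.mem_Ioi, sub_pos] using h)]
  rw [this, integral_sub_right_eq_self]

lemma erfc_le {x : ℝ} (hx : 0 ≤ x) : erfc x ≤ Real.exp (-x ^ 2) := by
  have hs : (0:ℝ) < Real.sqrt π := by positivity
  have key : (∫ u in Set.Ioi x, Real.exp (-u ^ 2))
      ≤ Real.exp (-x ^ 2) * (Real.sqrt π / 2) := by
    have h1 : (∫ u in Set.Ioi x, Real.exp (-u ^ 2))
        ≤ ∫ u in Set.Ioi x, Real.exp (-x ^ 2) * Real.exp (-(u - x) ^ 2) := by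
      apply setIntegral_mono_on integrable_g.integrableOn
      · exact ((integrable_g.comp_sub_right x).const_mul _).integrableOn
      · exact measurableSet_Ioi
      · intro u hu
        rw [← Real.exp_add]
        apply Real.exp_le_exp.2
        nlinarith [hu.out.le]
    have h2 : (∫ u in Set.Ioi x, Real.exp (-x ^ 2) * Real.exp (-(u - x) ^ 2))
        = Real.exp (-x ^ 2) * (Real.sqrt π / 2) := by
      rw [integral_const_mul, translate_Ioi _ integrable_g, gauss_Ioi]
    linarith
  rw [erfc]
  calc (2 / Real.sqrt π) * ∫ u in Set.Ioi x, Real.exp (-u ^ 2)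
      ≤ (2 / Real.sqrt π) * (Real.exp (-x ^ 2) * (Real.sqrt π / 2)) := by
        apply mul_le_mul_of_nonneg_left key (by positivity)
    _ = Real.exp (-x ^ 2) := by field_simp

lemma tendsto_pow_exp_sq (n : ℕ) :
    Tendsto (fun y : ℝ => y ^ n * Real.exp (-y ^ 2)) atTop (𝓝 0) := by
  apply squeeze_zero' (g := fun y : ℝ => y ^ n * Real.exp (-y))
  · filter_upwards [eventually_ge_atTop (0:ℝ)] with y hy
    positivity
  · filter_upwards [eventually_ge_atTop (1:ℝ)] with y hy
    have : Real.exp (-y ^ 2) ≤ Real.exp (-y) := by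
      apply Real.exp_le_exp.2; nlinarith
    have hyn : (0:ℝ) ≤ y ^ n := by positivity
    nlinarith [mul_le_mul_of_nonneg_left this hyn]
  · exact tendsto_pow_mul_exp_neg_atTop_nhds_zero n

lemma tendsto_y (rr a : ℝ) (ha : 0 < a) :
    Tendsto (fun r : ℝ => (r - rr) / a) atTop atTop := by
  apply Tendsto.atTop_div_const ha
  simpa [sub_eq_add_neg] using tendsto_atTop_add_const_right atTop (-rr) tendsto_id

lemma tendsto_poly_exp (a rr c : ℝ) (ha : 0 < a) :
    Tendsto (fun r : ℝ => (r ^ 2 / 2 + c) * Real.exp (-((r - rr) / a) ^ 2)) atTop (𝓝 0) := by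
  have h : (fun r : ℝ => (r ^ 2 / 2 + c) * Real.exp (-((r - rr) / a) ^ 2))
      = (fun y : ℝ => (a ^ 2 / 2) * (y ^ 2 * Real.exp (-y ^ 2))
          + ((a * rr) * (y ^ 1 * Real.exp (-y ^ 2))
          + (rr ^ 2 / 2 + c) * (y ^ 0 * Real.exp (-y ^ 2)))) ∘ (fun r => (r - rr) / a) := by
    funext r
    simp only [Function.comp, pow_one, pow_zero, one_mul]
    set y := (r - rr) / a with hy
    have hr : r = a * y + rr := by rw [hy]; field_simp; ring
    rw [hr]; ring
  rw [h]
  have := (((tendsto_pow_exp_sq 2).const_mul (a ^ 2 / 2)).add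
    (((tendsto_pow_exp_sq 1).const_mul (a * rr)).add
      ((tendsto_pow_exp_sq 0).const_mul (rr ^ 2 / 2 + c)))).comp (tendsto_y rr a ha)
  simpa using this

lemma integrable_r_exp (a rr : ℝ) (ha : 0 < a) :
    Integrable (fun r : ℝ => r * Real.exp (-((r - rr) / a) ^ 2)) := by
  have hb : (0:ℝ) < 1 / a ^ 2 := by positivity
  have h1 : Integrable (fun x : ℝ => x * Real.exp (-(1 / a ^ 2) * x ^ 2) +
      rr * Real.exp (-(1 / a ^ 2) * x ^ 2)) :=
    (integrable_mul_exp_neg_mul_sq hb).add ((integrable_exp_neg_mul_sq hb).const_mul rr)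
  have h2 := h1.comp_sub_right rr
  apply h2.congr
  filter_upwards with r
  have : -(1 / a ^ 2) * (r - rr) ^ 2 = -((r - rr) / a) ^ 2 := by field_simp
  simp only [this]
  ring

lemma integrableOn_r_erfc (a rr : ℝ) (ha : 0 < a) (hrr : 0 < rr) :
    IntegrableOn (fun r : ℝ => r * erfc ((r - rr) / a)) (Set.Ioi rr) := by
  have hyc : Continuous fun r : ℝ => (r - rr) / a := by continuity
  apply Integrable.mono' ((integrable_r_exp a rr ha).integrableOn)
  · exact ((continuous_id.mul (continuous_erfc.comp hyc)).aestronglyMeasurable).restrict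
  · rw [ae_restrict_iff' measurableSet_Ioi]
    filter_upwards with r hr
    have hr0 : 0 < r := lt_trans hrr hr
    have hy0 : 0 ≤ (r - rr) / a := by
      apply div_nonneg _ ha.le; linarith [hr.out]
    rw [Real.norm_eq_abs, abs_of_nonneg (mul_nonneg hr0.le (erfc_nonneg _))]
    exact mul_le_mul_of_nonneg_left (erfc_le hy0) hr0.le

lemma key_integral (a rr : ℝ) (ha : 0 < a) (hrr : 0 < rr) :
    ∫ r in Set.Ioi rr, r * erfc ((r - rr) / a)
      = a ^ 2 / 4 + a * rr / Real.sqrt π := by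
  have hs : (0:ℝ) < Real.sqrt π := by positivity
  set c0 : ℝ := a ^ 2 / 4 + rr ^ 2 / 2 with hc0
  set H : ℝ → ℝ := fun r =>
    (r ^ 2 / 2 - c0) * erfc ((r - rr) / a)
      - (a ^ 2 / (2 * Real.sqrt π)) * (((r - rr) / a) * Real.exp (-((r - rr) / a) ^ 2))
      - (a * rr / Real.sqrt π) * Real.exp (-((r - rr) / a) ^ 2) with hH
  have hyc : Continuous fun r : ℝ => (r - rr) / a := by continuity
  have hderiv : ∀ r : ℝ, HasDerivAt H (r * erfc ((r - rr) / a)) r := by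
    intro r
    have hy : HasDerivAt (fun r : ℝ => (r - rr) / a) (1 / a) r := by
      simpa using ((hasDerivAt_id r).sub_const rr).div_const a
    have he : HasDerivAt (fun r : ℝ => erfc ((r - rr) / a))
        (-(2 / Real.sqrt π) * Real.exp (-((r - rr) / a) ^ 2) * (1 / a)) r :=
      (hasDerivAt_erfc _).comp r hy
    have hexp : HasDerivAt (fun r : ℝ => Real.exp (-((r - rr) / a) ^ 2))
        (Real.exp (-((r - rr) / a) ^ 2) * (-(2 * ((r - rr) / a) ^ 1 * (1 / a)))) r :=
      ((hy.pow 2).neg).exp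
    have hpoly : HasDerivAt (fun r : ℝ => r ^ 2 / 2 - c0) (2 * r ^ 1 / 2) r :=
      ((hasDerivAt_pow 2 r).div_const 2).sub_const c0
    have h2 := (hy.mul hexp).const_mul (a ^ 2 / (2 * Real.sqrt π))
    have h3 := hexp.const_mul (a * rr / Real.sqrt π)
    rw [hH]
    refine (((hpoly.mul he).sub h2).sub h3).congr_deriv ?_
    have ha' : a ≠ 0 := ha.ne'
    have hs' : Real.sqrt π ≠ 0 := hs.ne'
    field_simp
    ring
  have hc0nn : 0 ≤ c0 := by rw [hc0]; positivity
  have hcont : ContinuousWithinAt H (Set.Ici rr) rr := by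
    have : Continuous H := by
      rw [hH]
      exact (((continuous_pow 2 |>.div_const 2 |>.sub continuous_const).mul
        (continuous_erfc.comp hyc)).sub
        (continuous_const.mul (hyc.mul ((hyc.pow 2).neg.rexp)))).sub
        (continuous_const.mul ((hyc.pow 2).neg.rexp))
    exact this.continuousWithinAt
  have t1 : Tendsto (fun r : ℝ => (r ^ 2 / 2 - c0) * erfc ((r - rr) / a)) atTop (𝓝 0) := by
    apply squeeze_zero_norm' ?_ (tendsto_poly_exp a rr c0 ha)
    filter_upwards [eventually_ge_atTop rr] with r hr
    have hy0 : 0 ≤ (r - rr) / a := div_nonneg (by linarith) ha.le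
    have h1 : |r ^ 2 / 2 - c0| ≤ r ^ 2 / 2 + c0 := by
      rw [abs_le]; constructor <;> nlinarith [sq_nonneg r]
    rw [norm_mul, Real.norm_eq_abs, Real.norm_eq_abs, abs_of_nonneg (erfc_nonneg _)]
    exact mul_le_mul h1 (erfc_le hy0) (erfc_nonneg _) (by positivity)
  have t2 : Tendsto (fun r : ℝ => (a ^ 2 / (2 * Real.sqrt π)) *
      (((r - rr) / a) * Real.exp (-((r - rr) / a) ^ 2))) atTop (𝓝 0) := by
    have := (((tendsto_pow_exp_sq 1).comp (tendsto_y rr a ha)).const_mul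
      (a ^ 2 / (2 * Real.sqrt π)))
    simpa [Function.comp] using this
  have t3 : Tendsto (fun r : ℝ => (a * rr / Real.sqrt π) *
      Real.exp (-((r - rr) / a) ^ 2)) atTop (𝓝 0) := by
    have := (((tendsto_pow_exp_sq 0).comp (tendsto_y rr a ha)).const_mul
      (a * rr / Real.sqrt π))
    simpa [Function.comp] using this
  have htend : Tendsto H atTop (𝓝 0) := by
    rw [hH]
    have := (t1.sub t2).sub t3
    simpa using this
  have hint := integral_Ioi_of_hasDerivAt_of_tendsto hcont
    (fun x _ => hderiv x) (integrableOn_r_erfc a rr ha hrr) htend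
  rw [hint, hH]
  simp only [sub_self, zero_div]
  rw [erfc_zero]
  norm_num
  rw [hc0]
  ring

lemma sqrt_form {D s : ℝ} (hD : 0 < D) (hs : 0 ≤ s) :
    Real.sqrt (4 * D * s) = 2 * Real.sqrt D * Real.sqrt s := by
  rw [show (4:ℝ) * D * s = (2 * Real.sqrt D * Real.sqrt s) ^ 2 by
    rw [mul_pow, mul_pow, Real.sq_sqrt hD.le, Real.sq_sqrt hs]; ring]
  exact Real.sqrt_sq (by positivity)

/-- Expected net number of molecules absorbed during `[t, t+T]` by a fully
absorbing sphere of radius `r_r` from a Poisson field of density `λ`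
(no degradation); the term for `t = 0` is interpreted as `0`. -/
theorem expected_net_absorption
    (D rr lam N t T : ℝ) (hD : 0 < D) (hrr : 0 < rr) (hlam : 0 < lam)
    (hN : 0 < N) (ht : 0 ≤ t) (hT : 0 < T) :
    4 * π * lam * N *
      (∫ r in Set.Ioi rr,
        ((rr / r) * erfc ((r - rr) / Real.sqrt (4 * D * (t + T))) -
          (if t = 0 then 0 else (rr / r) * erfc ((r - rr) / Real.sqrt (4 * D * t)))) * r ^ 2) =
      4 * Real.sqrt π * lam * N * rr *
        (D * Real.sqrt π * T + 2 * Real.sqrt D * rr * (Real.sqrt (t + T) - Real.sqrt t)) := by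
  have hs : (0:ℝ) < Real.sqrt π := by positivity
  have hπ : Real.sqrt π ^ 2 = π := Real.sq_sqrt pi_pos.le
  set a1 := Real.sqrt (4 * D * (t + T)) with ha1def
  have hs1 : (0:ℝ) < t + T := by linarith
  have ha1 : 0 < a1 := Real.sqrt_pos.2 (by positivity)
  have hsq1 : a1 ^ 2 = 4 * D * (t + T) := Real.sq_sqrt (by positivity)
  have hform1 : a1 = 2 * Real.sqrt D * Real.sqrt (t + T) := sqrt_form hD hs1.le
  rcases eq_or_lt_of_le ht with h0 | hpos
  · -- t = 0
    have ht0 : t = 0 := h0.symm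
    subst ht0
    simp only [if_pos rfl, sub_zero, ite_true]
    have hcongr : ∫ r in Set.Ioi rr,
        ((rr / r) * erfc ((r - rr) / a1)) * r ^ 2
        = ∫ r in Set.Ioi rr, rr * (r * erfc ((r - rr) / a1)) := by
      apply setIntegral_congr_fun measurableSet_Ioi
      intro r hr
      have : r ≠ 0 := (hrr.trans hr.out).ne'
      field_simp
    rw [hcongr, integral_const_mul, key_integral a1 rr ha1 hrr]
    rw [hsq1, hform1]
    rw [Real.sqrt_zero]
    set sp := Real.sqrt π with hsp
    rw [← hπ]
    field_simp
    ring
  · -- t > 0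
    set a2 := Real.sqrt (4 * D * t) with ha2def
    have ha2 : 0 < a2 := Real.sqrt_pos.2 (by positivity)
    have hsq2 : a2 ^ 2 = 4 * D * t := Real.sq_sqrt (by positivity)
    have hform2 : a2 = 2 * Real.sqrt D * Real.sqrt t := sqrt_form hD hpos.le
    simp only [if_neg hpos.ne']
    have hcongr : ∫ r in Set.Ioi rr,
        ((rr / r) * erfc ((r - rr) / a1) - (rr / r) * erfc ((r - rr) / a2)) * r ^ 2
        = ∫ r in Set.Ioi rr,
          (rr * (r * erfc ((r - rr) / a1)) - rr * (r * erfc ((r - rr) / a2))) := by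
      apply setIntegral_congr_fun measurableSet_Ioi
      intro r hr
      have : r ≠ 0 := (hrr.trans hr.out).ne'
      field_simp
    rw [hcongr, integral_sub
        ((integrableOn_r_erfc a1 rr ha1 hrr).const_mul rr)
        ((integrableOn_r_erfc a2 rr ha2 hrr).const_mul rr),
      integral_const_mul, integral_const_mul,
      key_integral a1 rr ha1 hrr, key_integral a2 rr ha2 hrr]
    rw [hsq1, hsq2, hform1, hform2]
    set sp := Real.sqrt π with hsp
    rw [← hπ]
    field_simp
    ring
end
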